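/- Let 𝒮 ⊂ ℝ^d be a simplex with vertices v_1,...,v_K satisfying d_max := max_k ‖v_k‖ ≥ σ*/2 and min_{k≠ℓ} ‖v_k − v_ℓ‖ ≥ √2·σ* for some σ* > 0. Define 𝒦(h₀) = {k : ‖v_k‖ ≥ d_max − h₀} and 𝒱(ε₀, h₀) = ∪_{k∈𝒦(h₀)} 𝒱_k(ε₀) with 𝒱_k(ε₀) the ε₀-simplicial-neighborhood of v_k. Given t > 0 with max{1, d_max/σ*}·t < 3σ*, if h₀ = σ*/3 and 1/2 > ε₀ ≥ (6/σ*)·max{1, d_max/σ*}·t, then every x ∈ 𝒮 \ 𝒱(ε₀, h₀) satisfies ‖x‖ ≤ d_max − t. -/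

import Mathlib

open scoped BigOperators

noncomputable def sval {d K : ℕ} (A : Matrix (Fin d) (Fin K) ℝ) (k : ℕ) : ℝ :=
  ⨆ W : {W : Submodule ℝ (EuclideanSpace ℝ (Fin K)) // Module.finrank ℝ W = k},
    ⨅ x : {x : EuclideanSpace ℝ (Fin K) // x ∈ W.1 ∧ ‖x‖ = 1},
      ‖Matrix.toEuclideanLin A x.1‖

noncomputable def vnorm {d : ℕ} (x : Fin d → ℝ) : ℝ :=
  Real.sqrt (∑ i, x i ^ 2)

open scoped RealInnerProductSpace

lemma vnorm_eq_norm {d : ℕ} (x : EuclideanSpace ℝ (Fin d)) : vnorm x = ‖x‖ := by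
  rw [EuclideanSpace.norm_eq]
  simp [vnorm, Real.norm_eq_abs, sq_abs]

lemma norm_sq_sum_smul {d K : ℕ} (v : Fin K → EuclideanSpace ℝ (Fin d)) (π : Fin K → ℝ)
    (s : Finset (Fin K)) :
    ‖∑ k ∈ s, π k • v k‖^2 = ∑ k ∈ s, ∑ l ∈ s, (π k * π l) * ⟪v k, v l⟫ := by
  rw [← real_inner_self_eq_norm_sq]
  simp only [inner_sum, sum_inner, real_inner_smul_left, real_inner_smul_right]
  apply Finset.sum_congr rfl; intro k _; apply Finset.sum_congr rfl; intro l _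
  rw [real_inner_comm]; ring

set_option maxHeartbeats 4000000

/-- points of the simplex outside all near-maximal simplicial neighborhoods
have norm at most d_max − t. -/
theorem stmt_19 (d K : ℕ) (hK : 2 ≤ K) (V : Matrix (Fin d) (Fin K) ℝ)
    (σ : ℝ) (hσ : 0 < σ)
    (dmax : ℝ) (hdmax : dmax = ⨆ k : Fin K, vnorm (fun i => V i k))
    (hdlow : σ / 2 ≤ dmax)
    (hsep : ∀ k ℓ : Fin K, k ≠ ℓ →
      Real.sqrt 2 * σ ≤ vnorm ((fun i => V i k) - fun i => V i ℓ))
    (t : ℝ) (ht : 0 < t) (htu : max 1 (dmax / σ) * t < 3 * σ)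
    (h₀ : ℝ) (hh₀ : h₀ = σ / 3)
    (ε₀ : ℝ) (hε₀u : ε₀ < 1 / 2) (hε₀l : (6 / σ) * (max 1 (dmax / σ) * t) ≤ ε₀)
    (x : Fin d → ℝ)
    (hxS : ∃ π : Fin K → ℝ, (∀ j, 0 ≤ π j) ∧ ∑ j, π j = 1 ∧ x = V.mulVec π)
    (hxout : ∀ k : Fin K, dmax - h₀ ≤ vnorm (fun i => V i k) →
      ¬ ∃ π : Fin K → ℝ, (∀ j, 0 ≤ π j) ∧ ∑ j, π j = 1 ∧ 1 - ε₀ ≤ π k ∧ x = V.mulVec π) :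
    vnorm x ≤ dmax - t := by
  obtain ⟨π, hπ0, hπ1, hxdef⟩ := hxS
  set v : Fin K → EuclideanSpace ℝ (Fin d) :=
    fun k => WithLp.toLp 2 (fun i => V i k) with hv
  have hvnorm : ∀ k, vnorm (fun i => V i k) = ‖v k‖ := fun k => vnorm_eq_norm (v k)
  have hdpos : 0 < dmax := lt_of_lt_of_le (by linarith) hdlow
  have hle : ∀ k, ‖v k‖ ≤ dmax := by
    intro k
    rw [hdmax, ← hvnorm k]
    exact le_ciSup (f := fun k => vnorm (fun i => V i k))
      (Set.Finite.bddAbove (Set.finite_range _)) k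
  set xE : EuclideanSpace ℝ (Fin d) := WithLp.toLp 2 x with hxE
  have hvnx : vnorm x = ‖xE‖ := vnorm_eq_norm xE
  have hxsum : xE = ∑ k, π k • v k := by
    rw [hxE, hxdef]
    ext i
    simp [Matrix.mulVec, dotProduct, hv, mul_comm, WithLp.ofLp_sum]
  have hsep' : ∀ k l : Fin K, k ≠ l → 2 * σ^2 ≤ ‖v k - v l‖^2 := by
    intro k l hkl
    have h1 := hsep k l hkl
    have h2 : vnorm ((fun i => V i k) - fun i => V i l) = ‖v k - v l‖ :=
      vnorm_eq_norm (v k - v l)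
    rw [h2] at h1
    have h5 : (Real.sqrt 2 * σ)^2 ≤ ‖v k - v l‖^2 :=
      pow_le_pow_left₀ (by positivity) h1 2
    have hs2 : Real.sqrt 2 ^ 2 = 2 := Real.sq_sqrt (by norm_num)
    calc 2 * σ^2 = (Real.sqrt 2 * σ)^2 := by rw [mul_pow, hs2]
      _ ≤ _ := h5
  clear_value v xE
  classical
  set Kset : Finset (Fin K) := Finset.univ.filter (fun k => dmax - h₀ ≤ ‖v k‖) with hKs
  set ρ : ℝ := ∑ k ∈ Kset, π k with hρ
  clear_value Kset
  have hρ0 : 0 ≤ ρ := Finset.sum_nonneg fun k _ => hπ0 k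
  have hρ1 : ρ ≤ 1 := by
    rw [hρ, ← hπ1]
    exact Finset.sum_le_sum_of_subset_of_nonneg (Finset.subset_univ _) fun k _ _ => hπ0 k
  have hcompl : ∑ k ∈ Ksetᶜ, π k = 1 - ρ := by
    have := Finset.sum_add_sum_compl Kset π
    rw [hπ1] at this
    linarith
  set s : EuclideanSpace ℝ (Fin d) := ∑ k ∈ Kset, π k • v k with hs
  set r : EuclideanSpace ℝ (Fin d) := ∑ k ∈ Ksetᶜ, π k • v k with hr
  clear_value ρ s r
  have hxsr : xE = s + r := by
    rw [hxsum, hs, hr, Finset.sum_add_sum_compl]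
  have hrle : ‖r‖ ≤ (1 - ρ) * (dmax - h₀) := by
    calc ‖r‖ = ‖∑ k ∈ Ksetᶜ, π k • v k‖ := by rw [hr]
      _ ≤ ∑ k ∈ Ksetᶜ, ‖π k • v k‖ := norm_sum_le _ _
      _ ≤ ∑ k ∈ Ksetᶜ, π k * (dmax - h₀) := by
          apply Finset.sum_le_sum
          intro k hk
          rw [norm_smul, Real.norm_eq_abs, abs_of_nonneg (hπ0 k)]
          have hk' : ¬ (dmax - h₀ ≤ ‖v k‖) := by
            simpa [hKs] using (Finset.mem_compl.mp hk)
          exact mul_le_mul_of_nonneg_left (le_of_not_ge hk') (hπ0 k)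
      _ = (1 - ρ) * (dmax - h₀) := by rw [← Finset.sum_mul, hcompl]
  have hwlt : ∀ k ∈ Kset, π k ≤ 1 - ε₀ := by
    intro k hk
    by_contra hc
    push_neg at hc
    rw [hKs] at hk
    have hk' : dmax - h₀ ≤ vnorm (fun i => V i k) := by
      rw [hvnorm k]
      exact (Finset.mem_filter.mp hk).2
    exact hxout k hk' ⟨π, hπ0, hπ1, le_of_lt hc, hxdef⟩
  -- numeric consequences of the hypotheses on ε₀
  have htle : t ≤ max 1 (dmax / σ) * t := by
    nlinarith [le_max_left 1 (dmax / σ)]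
  have hεl' : 6 * t / σ ≤ ε₀ := by
    have h2 : (6 / σ) * t ≤ (6 / σ) * (max 1 (dmax / σ) * t) :=
      mul_le_mul_of_nonneg_left htle (by positivity)
    calc 6 * t / σ = (6 / σ) * t := by ring
      _ ≤ ε₀ := le_trans h2 hε₀l
  have hεl2 : 6 * t ≤ ε₀ * σ := by
    have h := mul_le_mul_of_nonneg_right hεl' hσ.le
    rwa [div_mul_cancel₀ _ hσ.ne'] at h
  have hε0 : 0 < ε₀ := by
    have : 0 < 6 * t / σ := by positivity
    linarith
  have hεσt : 6 * dmax * t ≤ σ^2 * ε₀ := by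
    have h1 : dmax / σ ≤ max 1 (dmax / σ) := le_max_right _ _
    have h2 : (6 / σ) * ((dmax / σ) * t) ≤ (6 / σ) * (max 1 (dmax / σ) * t) := by
      apply mul_le_mul_of_nonneg_left _ (by positivity)
      exact mul_le_mul_of_nonneg_right h1 (le_of_lt ht)
    have h3 : 6 * dmax * t / σ^2 ≤ ε₀ := by
      have h4 : (6 / σ) * ((dmax / σ) * t) = 6 * dmax * t / σ^2 := by
        field_simp
      rw [h4] at h2
      exact le_trans h2 hε₀l
    calc 6 * dmax * t = (6 * dmax * t / σ^2) * σ^2 := by field_simp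
      _ ≤ ε₀ * σ^2 := mul_le_mul_of_nonneg_right h3 (by positivity)
      _ = σ^2 * ε₀ := by ring
  rw [show x = xE.ofLp by rw [hxE]]
  clear hxout hxdef hxE hvnx hxsum hdmax hsep hv hvnorm htu hπ1 hcompl hKs htle hεl' hK V x
  rcases le_or_gt (ε₀ / 2) (1 - ρ) with hcase | hcase
  · -- Case 1: enough mass outside the top vertices
    have hsle : ‖s‖ ≤ ρ * dmax := by
      calc ‖s‖ = ‖∑ k ∈ Kset, π k • v k‖ := by rw [hs]
        _ ≤ ∑ k ∈ Kset, ‖π k • v k‖ := norm_sum_le _ _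
        _ ≤ ∑ k ∈ Kset, π k * dmax := by
            apply Finset.sum_le_sum
            intro k _
            rw [norm_smul, Real.norm_eq_abs, abs_of_nonneg (hπ0 k)]
            exact mul_le_mul_of_nonneg_left (hle k) (hπ0 k)
        _ = ρ * dmax := by rw [← Finset.sum_mul, ← hρ]
    have hfin : ‖xE‖ ≤ dmax - (1 - ρ) * h₀ := by
      calc ‖xE‖ ≤ ‖s‖ + ‖r‖ := by rw [hxsr]; exact norm_add_le _ _
        _ ≤ ρ * dmax + (1 - ρ) * (dmax - h₀) := add_le_add hsle hrle
        _ = dmax - (1 - ρ) * h₀ := by ring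
    rw [vnorm_eq_norm xE]
    have hth : t ≤ (1 - ρ) * h₀ := by
      have h1 : ε₀ / 2 * h₀ ≤ (1 - ρ) * h₀ := by
        apply mul_le_mul_of_nonneg_right hcase (by rw [hh₀]; positivity)
      rw [hh₀] at h1
      nlinarith [hεl2]
    linarith
  · -- Case 2: almost all mass on the top vertices
    have hρ34 : 1 - ε₀ / 2 ≤ ρ := by linarith
    set c : ℝ := σ^2 * ε₀ / (4 * dmax) with hc
    clear_value c
    have hσε2d : σ^2 * ε₀ ≤ 2 * dmax^2 := by
      have h1 : σ^2 ≤ (2*dmax)^2 := pow_le_pow_left₀ hσ.le (by linarith) 2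
      have h2 : σ^2 * ε₀ ≤ σ^2 * (1/2) :=
        mul_le_mul_of_nonneg_left (le_of_lt hε₀u) (sq_nonneg σ)
      nlinarith [h1, h2]
    have hBnn : 0 ≤ dmax - c := by
      rw [hc, sub_nonneg, div_le_iff₀ (by positivity)]
      nlinarith
    have hcpos : 3 * t / 2 ≤ c := by
      rw [hc, le_div_iff₀ (by positivity)]
      nlinarith [hεσt]
    -- bound ‖s‖² via the inner-product expansion
    have hssq : ‖s‖^2 ≤ ρ * ρ * (dmax^2 - σ^2) + (∑ k ∈ Kset, π k^2) * σ^2 := by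
      rw [hs, norm_sq_sum_smul]
      have hterm : ∀ k ∈ Kset, ∀ l ∈ Kset,
          (π k * π l) * ⟪v k, v l⟫ ≤
            π k * π l * (dmax^2 - σ^2) + (if k = l then π k * π l * σ^2 else 0) := by
        intro k _ l _
        by_cases hkl : k = l
        · subst hkl
          rw [if_pos rfl]
          have h1 : ⟪v k, v k⟫ = ‖v k‖^2 := real_inner_self_eq_norm_sq (v k)
          have hkk : ‖v k‖^2 ≤ dmax^2 := by
            have := hle k; have := norm_nonneg (v k); nlinarith
          have := mul_le_mul_of_nonneg_left hkk (mul_nonneg (hπ0 k) (hπ0 k))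
          rw [h1]
          linarith
        · rw [if_neg hkl, add_zero]
          have h1 : ⟪v k, v l⟫ = (‖v k‖^2 + ‖v l‖^2 - ‖v k - v l‖^2)/2 := by
            have := norm_sub_sq_real (v k) (v l); linarith
          have h2 := hsep' k l hkl
          have hkk : ‖v k‖^2 ≤ dmax^2 := by
            have := hle k; have := norm_nonneg (v k); nlinarith
          have hll : ‖v l‖^2 ≤ dmax^2 := by
            have := hle l; have := norm_nonneg (v l); nlinarith
          have hip : ⟪v k, v l⟫ ≤ dmax^2 - σ^2 := by rw [h1]; linarith
          exact mul_le_mul_of_nonneg_left hip (mul_nonneg (hπ0 k) (hπ0 l))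
      have hA : ∑ k ∈ Kset, ∑ l ∈ Kset, π k * π l * (dmax^2 - σ^2)
          = ρ * ρ * (dmax^2 - σ^2) := by
        calc ∑ k ∈ Kset, ∑ l ∈ Kset, π k * π l * (dmax^2 - σ^2)
            = ∑ k ∈ Kset, π k * (ρ * (dmax^2 - σ^2)) := by
              apply Finset.sum_congr rfl
              intro k _
              simp only [mul_assoc]
              rw [← Finset.mul_sum, ← Finset.sum_mul, ← hρ]
          _ = ρ * ρ * (dmax^2 - σ^2) := by rw [← Finset.sum_mul, ← hρ]; ring
      have hB : ∑ k ∈ Kset, ∑ l ∈ Kset, (if k = l then π k * π l * σ^2 else 0)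
          = (∑ k ∈ Kset, π k^2) * σ^2 := by
        rw [Finset.sum_mul]
        apply Finset.sum_congr rfl
        intro k hk
        rw [Finset.sum_ite_eq Kset k (fun l => π k * π l * σ^2), if_pos hk]
        ring
      calc ∑ k ∈ Kset, ∑ l ∈ Kset, (π k * π l) * ⟪v k, v l⟫
          ≤ ∑ k ∈ Kset, ∑ l ∈ Kset,
              (π k * π l * (dmax^2 - σ^2) + (if k = l then π k * π l * σ^2 else 0)) := by
            apply Finset.sum_le_sum
            intro k hk
            exact Finset.sum_le_sum fun l hl => hterm k hk l hl
        _ = ρ * ρ * (dmax^2 - σ^2) + (∑ k ∈ Kset, π k^2) * σ^2 := by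
            simp only [Finset.sum_add_distrib]
            rw [hA, hB]
    have hQ : ∑ k ∈ Kset, π k^2 ≤ (1 - ε₀) * ρ := by
      rw [hρ, Finset.mul_sum]
      apply Finset.sum_le_sum
      intro k hk
      have h1 := hwlt k hk
      have h2 := hπ0 k
      nlinarith
    have h7 : (0:ℝ) ≤ 1 - ε₀ / 2 := by linarith
    have h6 : (1 - ε₀) * ρ ≤ ρ * ρ * (1 - ε₀ / 2) := by
      nlinarith [mul_nonneg hρ0 (sub_nonneg.2 hρ34), mul_nonneg hρ0 (sq_nonneg ε₀)]
    have step1 : ‖s‖^2 ≤ ρ^2 * dmax^2 - ρ^2 * σ^2 * (ε₀ / 2) := by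
      nlinarith [mul_le_mul_of_nonneg_right h6 (sq_nonneg σ),
        mul_le_mul_of_nonneg_right hQ (sq_nonneg σ)]
    have hexp : (ρ * (dmax - c))^2
        = ρ^2 * dmax^2 - ρ^2 * σ^2 * (ε₀ / 2) + ρ^2 * c^2 := by
      rw [hc]
      field_simp
      ring
    have hsnorm : ‖s‖ ≤ ρ * (dmax - c) := by
      have hB2 : ‖s‖^2 ≤ (ρ * (dmax - c))^2 := by
        rw [hexp]
        nlinarith [sq_nonneg (ρ * c), step1]
      have h0 : 0 ≤ ρ * (dmax - c) := mul_nonneg hρ0 hBnn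
      nlinarith [norm_nonneg s, hB2]
    -- conclude
    have hρc : t ≤ ρ * c := by
      have hρ' : (3:ℝ)/4 ≤ ρ := by linarith
      have := mul_le_mul hρ' hcpos (by positivity) hρ0
      nlinarith
    rw [vnorm_eq_norm xE]
    have hhnn : 0 ≤ (1 - ρ) * h₀ := by
      apply mul_nonneg (by linarith) (by rw [hh₀]; positivity)
    calc ‖xE‖ ≤ ‖s‖ + ‖r‖ := by rw [hxsr]; exact norm_add_le _ _
      _ ≤ ρ * (dmax - c) + (1 - ρ) * (dmax - h₀) := add_le_add hsnorm hrle
      _ = dmax - ρ * c - (1 - ρ) * h₀ := by ring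
      _ ≤ dmax - t := by linarith
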